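/- For the operator L = -∂² + n(n+1)/x², the space of principal parts at 0 of meromorphic local eigenfunctions (over all λ) is exactly the span of y^(-n), y^(-n+2), ..., ending at y^(-1) if n is odd or y^(-2) if n is even; in particular its dimension equals ⌈n/2⌉. -/

import Mathlib

open Finset


/-- coefficient -/
noncomputable def cc (n : ℕ) (k : ℤ) : ℂ :=
  -(((k : ℂ) + 2) * ((k : ℂ) + 1)) + (n : ℂ) * ((n : ℂ) + 1)

lemma cc_eq_zero_iff (n : ℕ) (k : ℤ) : cc n k = 0 ↔ k = (n : ℤ) - 1 ∨ k = -(n : ℤ) - 2 := by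
  have h : cc n k = ((n : ℂ) - k - 1) * ((n : ℂ) + k + 2) := by
    unfold cc; ring
  rw [h, mul_eq_zero]
  constructor
  · rintro (h1 | h1)
    · left
      have : ((k : ℂ)) = ((n : ℤ) - 1 : ℤ) := by push_cast; linear_combination -h1
      exact_mod_cast this
    · right
      have : ((k : ℂ)) = ((-(n : ℤ) - 2 : ℤ)) := by push_cast; linear_combination h1
      exact_mod_cast this
  · rintro (rfl | rfl) <;> [left; right] <;> push_cast <;> ring


lemma mem_span_of_poly {M : Type*} [AddCommGroup M] [Module ℂ M] (U : Submodule ℂ M)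
    (d : ℕ) (f : Fin d → M) (h : ∀ t : ℂ, (∑ i : Fin d, t ^ (i : ℕ) • f i) ∈ U) :
    ∀ i, f i ∈ U := by
  intro i
  set A : Matrix (Fin d) (Fin d) ℂ := Matrix.vandermonde (fun j : Fin d => (j : ℂ)) with hA
  have hdet : A.det ≠ 0 := by
    rw [hA, Matrix.det_vandermonde]
    refine Finset.prod_ne_zero_iff.2 fun a _ => Finset.prod_ne_zero_iff.2 fun b hb => ?_
    have hab : a < b := Finset.mem_Ioi.mp hb
    have h2 : ((a : ℕ) : ℂ) ≠ ((b : ℕ) : ℂ) := by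
      exact_mod_cast (Fin.lt_iff_val_lt_val.mp hab).ne
    rw [sub_ne_zero]
    intro hc; exact h2 (by exact_mod_cast hc.symm)
  have hinv : A⁻¹ * A = 1 := Matrix.nonsing_inv_mul A (by simpa using hdet)
  have key : f i = ∑ j : Fin d, (A⁻¹ i j) • (∑ k : Fin d, ((j : ℂ)) ^ (k : ℕ) • f k) := by
    have : ∀ j k : Fin d, ((j : ℂ)) ^ (k : ℕ) = A j k := by
      intro j k; rw [hA]; rfl
    calc f i = ∑ k : Fin d, ((1 : Matrix (Fin d) (Fin d) ℂ) i k) • f k := by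
          rw [Finset.sum_eq_single i]
          · simp
          · intro b _ hb; simp [Matrix.one_apply, Ne.symm hb]
          · intro hi; exact absurd (Finset.mem_univ i) hi
      _ = ∑ k : Fin d, ((A⁻¹ * A) i k) • f k := by rw [hinv]
      _ = ∑ k : Fin d, (∑ j : Fin d, A⁻¹ i j * A j k) • f k := by
          simp [Matrix.mul_apply]
      _ = ∑ k : Fin d, ∑ j : Fin d, (A⁻¹ i j * A j k) • f k := by
          simp [Finset.sum_smul]
      _ = ∑ j : Fin d, ∑ k : Fin d, (A⁻¹ i j * A j k) • f k := Finset.sum_comm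
      _ = ∑ j : Fin d, (A⁻¹ i j) • (∑ k : Fin d, ((j : ℂ)) ^ (k : ℕ) • f k) := by
          refine Finset.sum_congr rfl fun j _ => ?_
          rw [Finset.smul_sum]
          refine Finset.sum_congr rfl fun k _ => ?_
          rw [this, smul_smul]
  rw [key]
  exact Submodule.sum_mem _ fun j _ => Submodule.smul_mem _ _ (h _)

lemma vanish (n : ℕ) (lam : ℂ) (a : ℤ → ℂ) (N : ℤ) (hN : ∀ k, k < N → a k = 0)
    (hrec : ∀ k : ℤ, cc n k * a (k + 2) = lam * a k) :
    ∀ k : ℤ, (k < -(n : ℤ) ∨ (k < (n : ℤ) + 1 ∧ (k - (n : ℤ)) % 2 ≠ 0)) → a k = 0 := by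
  have main : ∀ m : ℕ, ∀ k : ℤ, k - N ≤ (m : ℤ) →
      (k < -(n : ℤ) ∨ (k < (n : ℤ) + 1 ∧ (k - (n : ℤ)) % 2 ≠ 0)) → a k = 0 := by
    intro m
    induction m using Nat.strong_induction_on with
    | _ m IH =>
      intro k hk hbad
      by_cases hkN : k < N
      · exact hN k hkN
      · push_neg at hkN
        have hbad2 : (k - 2 < -(n : ℤ) ∨ (k - 2 < (n : ℤ) + 1 ∧ (k - 2 - (n : ℤ)) % 2 ≠ 0)) := by
          omega
        have ha2 : a (k - 2) = 0 := by
          by_cases h2 : k - 2 < N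
          · exact hN _ h2
          · exact IH (m - 1) (by omega) (k - 2) (by omega) hbad2
        have hc : cc n (k - 2) ≠ 0 := by
          rw [Ne, cc_eq_zero_iff]
          omega
        have := hrec (k - 2)
        rw [show k - 2 + 2 = k by ring, ha2, mul_zero] at this
        exact (mul_eq_zero.mp this).resolve_left hc
  intro k hbad
  by_cases hkN : k < N
  · exact hN k hkN
  · exact main (k - N).toNat k (by omega) hbad

def GSet (n : ℕ) : Set (ℤ → ℂ) := {p : ℤ → ℂ | ∃ (lam : ℂ) (a : ℤ → ℂ),
    (∃ N : ℤ, ∀ k : ℤ, k < N → a k = 0) ∧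
    (∀ k : ℤ, (-(((k : ℂ) + 2) * ((k : ℂ) + 1)) + (n : ℂ) * ((n : ℂ) + 1)) * a (k + 2)
      = lam * a k) ∧
    p = fun k : ℤ => if k < 0 then a k else 0}

lemma single_mem (n : ℕ) (hn : 0 < n) (j : ℕ) (hj : 2 * j < n) :
    Pi.single (-(n : ℤ) + 2 * (j : ℤ)) (1 : ℂ) ∈ Submodule.span ℂ (GSet n) := by
  set m : ℕ := (n + 1) / 2 with hm
  set c' : ℕ → ℂ := fun i => cc n (-(n : ℤ) + 2 * (i : ℤ)) with hc'def
  have hc' : ∀ i : ℕ, c' i ≠ 0 := by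
    intro i
    rw [hc'def, Ne, cc_eq_zero_iff]
    omega
  set f : Fin m → (ℤ → ℂ) := fun j =>
    (∏ i ∈ range (j : ℕ), c' i)⁻¹ • (Pi.single (-(n : ℤ) + 2 * ((j : ℕ) : ℤ)) (1 : ℂ) : ℤ → ℂ) with hf
  have hsum : ∀ t : ℂ, (∑ i : Fin m, t ^ (i : ℕ) • f i) ∈ Submodule.span ℂ (GSet n) := by
    intro t
    set b : ℕ → ℂ := fun j => t ^ j * (∏ i ∈ range j, c' i)⁻¹ with hb
    set a : ℤ → ℂ := fun k =>
      if -(n : ℤ) ≤ k ∧ (k + (n : ℤ)) % 2 = 0 then b ((k + (n : ℤ)) / 2).toNat else 0 with ha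
    apply Submodule.subset_span
    refine ⟨t, a, ⟨-(n : ℤ), fun k hk => ?_⟩, fun k => ?_, ?_⟩
    · rw [ha]; simp only []
      rw [if_neg]; omega
    · -- recurrence
      show cc n k * a (k + 2) = t * a k
      by_cases hcond : -(n : ℤ) ≤ k ∧ (k + (n : ℤ)) % 2 = 0
      · set j0 : ℕ := ((k + (n : ℤ)) / 2).toNat with hj0
        have hkj : k = -(n : ℤ) + 2 * (j0 : ℤ) := by omega
        have hcond2 : -(n : ℤ) ≤ k + 2 ∧ (k + 2 + (n : ℤ)) % 2 = 0 := by omega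
        have hj2 : ((k + 2 + (n : ℤ)) / 2).toNat = j0 + 1 := by omega
        have hak : a k = b j0 := by rw [ha]; simp only []; rw [if_pos hcond]
        have hak2 : a (k + 2) = b (j0 + 1) := by
          rw [ha]; simp only []; rw [if_pos hcond2, hj2]
        have hck : cc n k = c' j0 := by rw [hc'def, hkj]
        rw [hak, hak2, hck, hb]
        simp only []
        rw [prod_range_succ, mul_inv, pow_succ]
        have hinv : c' j0 * (c' j0)⁻¹ = 1 := mul_inv_cancel₀ (hc' j0)
        linear_combination (t * t ^ j0 * (∏ x ∈ range j0, c' x)⁻¹) * hinv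
      · have hak : a k = 0 := by rw [ha]; simp only []; rw [if_neg hcond]
        rw [hak, mul_zero]
        by_cases hcond2 : -(n : ℤ) ≤ k + 2 ∧ (k + 2 + (n : ℤ)) % 2 = 0
        · have hkval : k = -(n : ℤ) - 2 := by omega
          have : cc n k = 0 := by rw [cc_eq_zero_iff]; right; exact hkval
          rw [this, zero_mul]
        · have : a (k + 2) = 0 := by rw [ha]; simp only []; rw [if_neg hcond2]
          rw [this, mul_zero]
    · -- the sum equals the principal part of a
      funext k
      rw [Finset.sum_apply]
      by_cases hk : k < 0
      · rw [if_pos hk]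
        by_cases hcond : -(n : ℤ) ≤ k ∧ (k + (n : ℤ)) % 2 = 0
        · set j0 : ℕ := ((k + (n : ℤ)) / 2).toNat with hj0
          have hkj : k = -(n : ℤ) + 2 * (j0 : ℤ) := by omega
          have hj0m : j0 < m := by omega
          have hak : a k = b j0 := by rw [ha]; simp only []; rw [if_pos hcond]
          rw [hak]
          rw [Finset.sum_eq_single (⟨j0, hj0m⟩ : Fin m)]
          · rw [hf]
            simp only [Pi.smul_apply, smul_eq_mul]
            rw [hkj, Pi.single_apply, if_pos rfl, hb]
            simp only []
            ring
          · intro i _ hi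
            rw [hf]
            simp only [Pi.smul_apply, smul_eq_mul]
            rw [Pi.single_apply, if_neg, mul_zero, mul_zero]
            intro hcontra
            apply hi
            have : (i : ℕ) = j0 := by omega
            exact Fin.ext this
          · intro h; exact absurd (Finset.mem_univ _) h
        · have hak : a k = 0 := by rw [ha]; simp only []; rw [if_neg hcond]
          rw [hak]
          apply Finset.sum_eq_zero
          intro i _
          rw [hf]
          simp only [Pi.smul_apply, smul_eq_mul]
          rw [Pi.single_apply, if_neg, mul_zero, mul_zero]
          intro hcontra
          apply hcond
          constructor <;> omega
      · rw [if_neg hk]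
        apply Finset.sum_eq_zero
        intro i _
        rw [hf]
        simp only [Pi.smul_apply, smul_eq_mul]
        rw [Pi.single_apply, if_neg, mul_zero, mul_zero]
        have him : (i : ℕ) < m := i.isLt
        intro hcontra
        omega
  have hfmem := mem_span_of_poly _ m f hsum
  have hjm : j < m := by omega
  have := hfmem ⟨j, hjm⟩
  rw [hf] at this
  simp only [] at this
  have hprod : (∏ i ∈ range j, c' i) ≠ 0 := Finset.prod_ne_zero_iff.2 fun i _ => hc' i
  have key := Submodule.smul_mem _ (∏ i ∈ range j, c' i) this
  rwa [smul_smul, mul_inv_cancel₀ hprod, one_smul] at key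

/-- The target submodule. -/
noncomputable def Ssub (n : ℕ) : Submodule ℂ (ℤ → ℂ) where
  carrier := {p : ℤ → ℂ | ∀ k : ℤ, ¬(-(n : ℤ) ≤ k ∧ k < 0 ∧ (k - (n : ℤ)) % 2 = 0) → p k = 0}
  add_mem' := by intro a b ha hb k hk; simp only [Pi.add_apply, ha k hk, hb k hk, add_zero]
  zero_mem' := by intro k hk; rfl
  smul_mem' := by intro c a ha k hk; simp only [Pi.smul_apply, ha k hk, smul_zero]

noncomputable def TT (n : ℕ) : Finset ℤ :=
  (Finset.Ico (-(n : ℤ)) 0).filter (fun k => (k - (n : ℤ)) % 2 = 0)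

lemma mem_TT (n : ℕ) (k : ℤ) :
    k ∈ TT n ↔ (-(n : ℤ) ≤ k ∧ k < 0 ∧ (k - (n : ℤ)) % 2 = 0) := by
  simp only [TT, Finset.mem_filter, Finset.mem_Ico]
  tauto

lemma TT_eq_image (n : ℕ) :
    TT n = (Finset.range ((n + 1) / 2)).image (fun j : ℕ => -(n : ℤ) + 2 * (j : ℤ)) := by
  ext k
  simp only [mem_TT, Finset.mem_image, Finset.mem_range]
  constructor
  · rintro ⟨h1, h2, h3⟩
    refine ⟨((k + (n : ℤ)) / 2).toNat, by omega, by omega⟩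
  · rintro ⟨j, hj, rfl⟩
    refine ⟨by omega, by omega, by omega⟩

lemma TT_card (n : ℕ) : (TT n).card = (n + 1) / 2 := by
  rw [TT_eq_image, Finset.card_image_of_injective _ (fun a b hab => by omega),
    Finset.card_range]

theorem span_eq_Ssub (n : ℕ) (hn : 0 < n) :
    Submodule.span ℂ (GSet n) = Ssub n := by
  apply le_antisymm
  · rw [Submodule.span_le]
    rintro p ⟨lam, a, ⟨N, hN⟩, hrec, rfl⟩
    intro k hk
    simp only []
    by_cases h0 : k < 0
    · rw [if_pos h0]
      apply vanish n lam a N hN hrec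
      omega
    · rw [if_neg h0]
  · intro p hp
    have hrep : p = ∑ k ∈ TT n, p k • (Pi.single k (1 : ℂ) : ℤ → ℂ) := by
      funext j
      rw [Finset.sum_apply]
      by_cases hj : j ∈ TT n
      · rw [Finset.sum_eq_single j]
        · simp
        · intro b _ hb
          simp [Pi.single_apply, Ne.symm hb]
        · intro h; exact absurd hj h
      · rw [hp j (by rw [← mem_TT]; exact hj)]
        symm
        apply Finset.sum_eq_zero
        intro i hi
        have : j ≠ i := fun h => hj (h ▸ hi)
        simp [Pi.single_apply, this]
    rw [hrep]
    apply Submodule.sum_mem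
    intro k hk
    apply Submodule.smul_mem
    rw [mem_TT] at hk
    have : k = -(n : ℤ) + 2 * (((k + (n : ℤ)) / 2).toNat : ℤ) := by omega
    rw [this]
    exact single_mem n hn _ (by omega)

noncomputable def restr (n : ℕ) : (Ssub n) →ₗ[ℂ] (↥(TT n) → ℂ) :=
  (LinearMap.funLeft ℂ ℂ (fun k : ↥(TT n) => (k : ℤ))).comp (Ssub n).subtype

lemma restr_bij (n : ℕ) : Function.Bijective (restr n) := by
  constructor
  · rw [injective_iff_map_eq_zero]
    intro ⟨p, hp⟩ h
    ext k
    show p k = 0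
    by_cases hk : k ∈ TT n
    · have := congrFun h ⟨k, hk⟩
      exact this
    · exact hp k (by rw [← mem_TT]; exact hk)
  · intro g
    classical
    refine ⟨⟨fun k => if h : k ∈ TT n then g ⟨k, h⟩ else 0, ?_⟩, ?_⟩
    · intro k hk
      simp only []
      rw [dif_neg]
      rw [mem_TT]; exact hk
    · funext ⟨k, hk⟩
      show (if h : k ∈ TT n then g ⟨k, h⟩ else 0) = g ⟨k, hk⟩
      rw [dif_pos hk]

theorem finrank_Ssub (n : ℕ) : Module.finrank ℂ (Ssub n) = (n + 1) / 2 := by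
  have e := LinearEquiv.ofBijective (restr n) (restr_bij n)
  rw [LinearEquiv.finrank_eq e, Module.finrank_fintype_fun_eq_card, Fintype.card_coe, TT_card]


/-- For `L = -∂² + n(n+1)/x²`, the space spanned by the principal parts at `0` of the
meromorphic local eigenfunctions (over all `λ`, eigenfunctions encoded by their Laurent
coefficient sequences) is exactly the space of principal parts supported on
`y^{-n}, y^{-n+2}, …` (ending at `y^{-1}` for odd `n`, at `y^{-2}` for even `n`), and
its dimension is `⌈n/2⌉ = (n+1)/2`. -/
theorem principal_parts_of_eigenfunctions (n : ℕ) (hn : 0 < n) :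
    ((Submodule.span ℂ {p : ℤ → ℂ | ∃ (lam : ℂ) (a : ℤ → ℂ),
        (∃ N : ℤ, ∀ k : ℤ, k < N → a k = 0) ∧
        (∀ k : ℤ, (-(((k : ℂ) + 2) * ((k : ℂ) + 1)) + (n : ℂ) * ((n : ℂ) + 1)) * a (k + 2)
          = lam * a k) ∧
        p = fun k : ℤ => if k < 0 then a k else 0} : Set (ℤ → ℂ))
      = {p : ℤ → ℂ | ∀ k : ℤ, ¬(-(n : ℤ) ≤ k ∧ k < 0 ∧ (k - (n : ℤ)) % 2 = 0) → p k = 0})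
    ∧ Module.finrank ℂ (Submodule.span ℂ {p : ℤ → ℂ | ∃ (lam : ℂ) (a : ℤ → ℂ),
        (∃ N : ℤ, ∀ k : ℤ, k < N → a k = 0) ∧
        (∀ k : ℤ, (-(((k : ℂ) + 2) * ((k : ℂ) + 1)) + (n : ℂ) * ((n : ℂ) + 1)) * a (k + 2)
          = lam * a k) ∧
        p = fun k : ℤ => if k < 0 then a k else 0}) = (n + 1) / 2 := by
  constructor
  · show (Submodule.span ℂ (GSet n) : Set (ℤ → ℂ)) = ((Ssub n : Submodule ℂ (ℤ → ℂ)) : Set (ℤ → ℂ))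
    rw [span_eq_Ssub n hn]
  · show Module.finrank ℂ (Submodule.span ℂ (GSet n)) = (n + 1) / 2
    rw [span_eq_Ssub n hn, finrank_Ssub]
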